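/- Let M be an internally 4-connected binary matroid with |E(M)| ≥ 11, let e ∈ E(M) be such that M\e is (4, 4)-connected, let Q be a quad of M\e, and let x ∈ Q. Then M\x\e and M\x are 3-connected. -/

import Mathlib

open scoped Matroid

universe u v

namespace Matroid

variable {α : Type u} {β : Type v}

/-- Deletion of a set of elements from a matroid. -/
def Del (M : Matroid α) (D : Set α) : Matroid α := M ↾ (M.E \ D)

/-- Contraction of a set of elements in a matroid. -/
def Con (M : Matroid α) (C : Set α) : Matroid α := (M✶.Del C)✶

/-- A circuit is a minimal dependent set. -/
def IsCircuit₀ (M : Matroid α) (C : Set α) : Prop :=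
  M.Dep C ∧ ∀ ⦃D : Set α⦄, D ⊂ C → M.Indep D

/-- A cocircuit is a circuit of the dual matroid. -/
def IsCocircuit₀ (M : Matroid α) (C : Set α) : Prop := M✶.IsCircuit₀ C

/-- A triangle is a 3-element circuit. -/
def IsTriangle (M : Matroid α) (T : Set α) : Prop := M.IsCircuit₀ T ∧ T.encard = 3

/-- A triad is a 3-element cocircuit. -/
def IsTriad (M : Matroid α) (T : Set α) : Prop := M.IsCocircuit₀ T ∧ T.encard = 3

/-- A quad is a 4-element set that is both a circuit and a cocircuit. -/
def IsQuad (M : Matroid α) (Q : Set α) : Prop :=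
  M.IsCircuit₀ Q ∧ M.IsCocircuit₀ Q ∧ Q.encard = 4

/-- The rank (in `ℕ∞`) of a set in a matroid: the supremum of the cardinalities
of independent subsets of the set. -/
noncomputable def eRk₀ (M : Matroid α) (X : Set α) : ℕ∞ :=
  ⨆ I ∈ {I : Set α | M.Indep I ∧ I ⊆ X}, I.encard

/-- `M.ConnBddBy X k` says that the connectivity `λ_M(X) = r(X) + r(E − X) − r(M)`
is at most `k`, phrased without subtraction. -/
def ConnBddBy (M : Matroid α) (X : Set α) (k : ℕ) : Prop :=
  M.eRk₀ X + M.eRk₀ (M.E \ X) ≤ M.eRk₀ M.E + (k : ℕ∞)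

/-- `(X, Y)` is a `k`-separation of `M`: a partition of the ground set with both
sides of size at least `k` and `λ_M(X) ≤ k − 1`. -/
def IsKSep (M : Matroid α) (k : ℕ) (X Y : Set α) : Prop :=
  Disjoint X Y ∧ X ∪ Y = M.E ∧ (k : ℕ∞) ≤ X.encard ∧ (k : ℕ∞) ≤ Y.encard ∧
    M.ConnBddBy X (k - 1)

/-- A matroid is `n`-connected if it has no `k`-separation for any `k < n`. -/
def NConnected (M : Matroid α) (n : ℕ) : Prop :=
  ∀ k : ℕ, 0 < k → k < n → ∀ X Y : Set α, ¬ M.IsKSep k X Y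

/-- A matroid is 3-connected if it has no 1- or 2-separation. -/
def ThreeConnected (M : Matroid α) : Prop := M.NConnected 3

/-- A matroid is 4-connected if it has no 1-, 2- or 3-separation. -/
def FourConnected (M : Matroid α) : Prop := M.NConnected 4

/-- A matroid is `(4, k)`-connected if it is 3-connected and every 3-separation
has a side with at most `k` elements. -/
def FourKConnected (M : Matroid α) (k : ℕ) : Prop :=
  M.ThreeConnected ∧ ∀ X Y : Set α, M.IsKSep 3 X Y →
    X.encard ≤ (k : ℕ∞) ∨ Y.encard ≤ (k : ℕ∞)

/-- A matroid is internally 4-connected if it is (4, 3)-connected. -/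
def InternallyFourConnected (M : Matroid α) : Prop := M.FourKConnected 3

/-- A `(4, 3)`-violator is a 3-separation with both sides of size at least 4. -/
def Violator43 (M : Matroid α) (X Y : Set α) : Prop :=
  M.IsKSep 3 X Y ∧ (4 : ℕ∞) ≤ X.encard ∧ (4 : ℕ∞) ≤ Y.encard

/-- Two matroids are isomorphic if there is a bijection between their ground sets
carrying independent sets to independent sets in both directions. -/
def IsIsoTo (M : Matroid α) (N : Matroid β) : Prop :=
  ∃ e : M.E ≃ N.E, ∀ I : Set M.E,
    M.Indep (Subtype.val '' I) ↔ N.Indep (Subtype.val '' (e '' I))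

/-- `N` is a minor of `M` if it is obtained from `M` by contracting a set and
deleting a disjoint set. -/
def IsMinorOf (N M : Matroid α) : Prop :=
  ∃ C D : Set α, Disjoint C D ∧ C ⊆ M.E ∧ D ⊆ M.E ∧ N = (M.Con C).Del D

/-- `M` has an `N`-minor: a minor of `M` isomorphic to `N`. -/
def HasIsoMinor (M : Matroid α) (N : Matroid β) : Prop :=
  ∃ M₀ : Matroid α, M₀.IsMinorOf M ∧ M₀.IsIsoTo N

/-- `M` has a proper `N`-minor: a proper minor of `M` isomorphic to `N`. -/
def HasProperIsoMinor (M : Matroid α) (N : Matroid β) : Prop :=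
  ∃ M₀ : Matroid α, M₀.IsMinorOf M ∧ M₀ ≠ M ∧ M₀.IsIsoTo N

/-- A matroid is binary if it is representable over `GF(2)`. -/
def IsBinary (M : Matroid α) : Prop :=
  ∃ (ι : Type u) (v : α → ι → ZMod 2), ∀ I : Set α,
    M.Indep I ↔ I ⊆ M.E ∧ LinearIndependent (ZMod 2) (fun x : I => v x)

/-- A 4-fan: an ordering `(a, b, c, d)` of a 4-element set with `{a,b,c}` a
triangle and `{b,c,d}` a triad. -/
def Is4FanOrdering (M : Matroid α) (a b c d : α) : Prop :=
  ({a, b, c, d} : Set α).encard = 4 ∧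
    M.IsTriangle {a, b, c} ∧ M.IsTriad {b, c, d}

/-- A 5-fan: an ordering of a 5-element set whose alternating sequence contains
two triangles. -/
def Is5FanOrdering (M : Matroid α) (a b c d e : α) : Prop :=
  ({a, b, c, d, e} : Set α).encard = 5 ∧
    M.IsTriangle {a, b, c} ∧ M.IsTriad {b, c, d} ∧ M.IsTriangle {c, d, e}

/-- A 5-cofan: an ordering of a 5-element set whose alternating sequence contains
two triads. -/
def Is5CofanOrdering (M : Matroid α) (a b c d e : α) : Prop :=
  ({a, b, c, d, e} : Set α).encard = 5 ∧
    M.IsTriad {a, b, c} ∧ M.IsTriangle {b, c, d} ∧ M.IsTriad {c, d, e}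

/-- A fan ordering `(s 0, …, s (n-1))`: the consecutive triples form an
alternating sequence of triangles and triads. -/
def IsFanOrdering (M : Matroid α) (n : ℕ) (s : ℕ → α) : Prop :=
  3 ≤ n ∧ Set.InjOn s (Set.Iio n) ∧
    ((∀ i : ℕ, i + 3 ≤ n →
        (Even i → M.IsTriangle {s i, s (i + 1), s (i + 2)}) ∧
        (¬ Even i → M.IsTriad {s i, s (i + 1), s (i + 2)})) ∨
     (∀ i : ℕ, i + 3 ≤ n →
        (Even i → M.IsTriad {s i, s (i + 1), s (i + 2)}) ∧
        (¬ Even i → M.IsTriangle {s i, s (i + 1), s (i + 2)})))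

/-- The counterexample hypotheses on a pair `(M, N)`. -/
def CexHyp (M : Matroid α) (N : Matroid β) : Prop :=
  M.IsBinary ∧ N.IsBinary ∧
  M.InternallyFourConnected ∧ N.InternallyFourConnected ∧
  M.HasProperIsoMinor N ∧
  (8 : ℕ∞) ≤ N.E.encard ∧ (11 : ℕ∞) ≤ M.E.encard ∧
  (∀ T : Set α, M.IsTriangle T → ∀ e ∈ T, ¬ (M.Del {e}).HasIsoMinor N) ∧
  (∀ T : Set α, M.IsTriad T → ∀ e ∈ T, ¬ (M.Con {e}).HasIsoMinor N) ∧
  ¬ ∃ M' : Matroid α, M'.IsMinorOf M ∧ M'.InternallyFourConnected ∧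
      M'.HasIsoMinor N ∧
      M'.E.encard + 1 ≤ M.E.encard ∧ M.E.encard ≤ M'.E.encard + 2

end Matroid

open Matroid

open Set

/- ### Auxiliary lemmas -/
namespace Matroid

variable {α : Type u} {M : Matroid α} {X Y I J A B C D : Set α} {a q : α}

lemma encard_le_eRk₀ (hI : M.Indep I) (hIX : I ⊆ X) : I.encard ≤ M.eRk₀ X :=
  le_biSup _ (show I ∈ {I : Set α | M.Indep I ∧ I ⊆ X} from ⟨hI, hIX⟩)

lemma eRk₀_le_encard (M : Matroid α) (X : Set α) : M.eRk₀ X ≤ X.encard :=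
  iSup₂_le fun _ hI => encard_mono hI.2

lemma eRk₀_le_of_forall {c : ℕ∞} (h : ∀ I, M.Indep I → I ⊆ X → I.encard ≤ c) :
    M.eRk₀ X ≤ c :=
  iSup₂_le fun I hI => h I hI.1 hI.2

lemma eRk₀_mono (M : Matroid α) (hXY : X ⊆ Y) : M.eRk₀ X ≤ M.eRk₀ Y :=
  iSup₂_le fun _ hI => encard_le_eRk₀ hI.1 (hI.2.trans hXY)

lemma eRk₀_le_ground (M : Matroid α) (X : Set α) : M.eRk₀ X ≤ M.eRk₀ M.E :=
  iSup₂_le fun _ hI => encard_le_eRk₀ hI.1 hI.1.subset_ground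

lemma indep_eRk₀_eq (hI : M.Indep I) : M.eRk₀ I = I.encard :=
  le_antisymm (eRk₀_le_encard M I) (encard_le_eRk₀ hI Subset.rfl)

lemma IsBasis.eRk₀_eq (hI : M.IsBasis I X) : M.eRk₀ X = I.encard := by
  refine le_antisymm (iSup₂_le fun J hJ => ?_) (encard_le_eRk₀ hI.indep hI.subset)
  by_contra hlt
  obtain ⟨f, hf, hfi⟩ := hI.indep.augment hJ.1 (lt_of_not_ge fun h => hlt (h.trans le_rfl))
  exact hf.2 (hI.mem_of_insert_indep (hJ.2 hf.1) hfi)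

lemma eRk₀_insert_le (M : Matroid α) (a : α) (X : Set α) :
    M.eRk₀ (insert a X) ≤ M.eRk₀ X + 1 := by
  refine iSup₂_le fun I hI => ?_
  have hsub : I \ {a} ⊆ X := by
    intro y hy
    rcases hI.2 hy.1 with h | h
    · exact absurd h hy.2
    · exact h
  have h1 : (I \ {a}).encard ≤ M.eRk₀ X :=
    encard_le_eRk₀ (hI.1.subset diff_subset) hsub
  by_cases ha : a ∈ I
  · rw [← encard_diff_singleton_add_one ha]
    exact add_le_add_left h1 1
  · rw [show I \ {a} = I from diff_singleton_eq_self ha] at h1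
    exact h1.trans le_self_add

lemma eRk₀_submod (M : Matroid α) (hX : X ⊆ M.E) (hY : Y ⊆ M.E) :
    M.eRk₀ (X ∪ Y) + M.eRk₀ (X ∩ Y) ≤ M.eRk₀ X + M.eRk₀ Y := by
  obtain ⟨I, hI⟩ := M.exists_isBasis (X ∩ Y) ((inter_subset_left).trans hX)
  obtain ⟨J, hJ, hIJ⟩ := hI.indep.subset_isBasis_of_subset
    (hI.subset.trans ((inter_subset_left).trans subset_union_left)) (union_subset hX hY)
  have h1 : M.eRk₀ (X ∪ Y) = J.encard := hJ.eRk₀_eq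
  have h2 : M.eRk₀ (X ∩ Y) = I.encard := hI.eRk₀_eq
  have hIJXY : I ⊆ J ∩ (X ∩ Y) := subset_inter hIJ hI.subset
  have key : J.encard + I.encard ≤ (J ∩ X).encard + (J ∩ Y).encard := by
    have e1 : (J ∩ X) ∪ (J ∩ Y) = J := by
      rw [← inter_union_distrib_left, inter_eq_self_of_subset_left hJ.subset]
    have e2 : (J ∩ X) ∩ (J ∩ Y) = J ∩ (X ∩ Y) := by
      ext y; simp only [mem_inter_iff]; tauto
    calc J.encard + I.encard ≤ J.encard + (J ∩ (X ∩ Y)).encard :=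
          add_le_add_right (encard_mono hIJXY) _
      _ = ((J ∩ X) ∪ (J ∩ Y)).encard + ((J ∩ X) ∩ (J ∩ Y)).encard := by rw [e1, e2]
      _ = (J ∩ X).encard + (J ∩ Y).encard := encard_union_add_encard_inter _ _
  rw [h1, h2]
  refine key.trans (add_le_add ?_ ?_)
  · exact encard_le_eRk₀ (hJ.indep.subset inter_subset_left) inter_subset_right
  · exact encard_le_eRk₀ (hJ.indep.subset inter_subset_left) inter_subset_right

lemma eRk₀_absorb (hB : M.eRk₀ (insert a B) ≤ M.eRk₀ B) (hBA : B ⊆ A)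
    (hA : A ⊆ M.E) (haE : a ∈ M.E) (hfin : M.eRk₀ B ≠ ⊤) :
    M.eRk₀ (insert a A) ≤ M.eRk₀ A := by
  have hsub := M.eRk₀_submod (X := A) (Y := insert a B) hA (insert_subset haE (hBA.trans hA))
  have e1 : A ∪ insert a B = insert a A := by
    rw [union_insert, union_eq_self_of_subset_right hBA]
  rw [e1] at hsub
  have h2 : M.eRk₀ (insert a A) + M.eRk₀ B ≤ M.eRk₀ A + M.eRk₀ B := by
    calc M.eRk₀ (insert a A) + M.eRk₀ B
        ≤ M.eRk₀ (insert a A) + M.eRk₀ (A ∩ insert a B) := by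
          refine add_le_add_right (M.eRk₀_mono ?_) _
          exact subset_inter hBA (subset_insert _ _)
      _ ≤ M.eRk₀ A + M.eRk₀ (insert a B) := hsub
      _ ≤ M.eRk₀ A + M.eRk₀ B := add_le_add_right hB _
  exact (WithTop.add_le_add_iff_right hfin).mp h2

lemma del_ground' (M : Matroid α) (D : Set α) : (M.Del D).E = M.E \ D := rfl

lemma del_indep_iff : (M.Del D).Indep I ↔ M.Indep I ∧ I ⊆ M.E \ D :=
  restrict_indep_iff

lemma del_eRk₀ (hX : X ⊆ M.E \ D) : (M.Del D).eRk₀ X = M.eRk₀ X := by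
  refine le_antisymm (iSup₂_le fun I hI => ?_) (iSup₂_le fun I hI => ?_)
  · exact encard_le_eRk₀ (del_indep_iff.mp hI.1).1 hI.2
  · exact encard_le_eRk₀ (del_indep_iff.mpr ⟨hI.1, hI.2.trans hX⟩) hI.2

lemma cocirc_compl_rank (hC : (M.Del D).IsCocircuit₀ C) (hfin : M.eRk₀ M.E ≠ ⊤) :
    M.eRk₀ ((M.E \ D) \ C) + 1 ≤ M.eRk₀ (M.E \ D) := by
  set R := M.E \ D with hR
  have hCR : C ⊆ R := by
    have := hC.1.2
    exact this
  have hle : M.eRk₀ (R \ C) ≤ M.eRk₀ R := M.eRk₀_mono diff_subset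
  have hne : M.eRk₀ (R \ C) ≠ M.eRk₀ R := by
    intro heq
    obtain ⟨I, hI⟩ := M.exists_isBasis (R \ C) ((diff_subset).trans diff_subset)
    obtain ⟨J, hJ, hIJ⟩ := hI.indep.subset_isBasis_of_subset (hI.subset.trans diff_subset)
      diff_subset
    have hIfin : I.Finite := by
      rw [← encard_ne_top_iff]
      intro htop
      exact hfin (top_le_iff.mp (by rw [← htop, ← hI.eRk₀_eq, heq]; exact M.eRk₀_le_ground R))
    have hcard : J.encard ≤ I.encard := by
      rw [← hI.eRk₀_eq, ← hJ.eRk₀_eq, heq]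
    have hJfin : J.Finite := hIfin.finite_of_encard_le hcard
    have hIJ' : I = J := hJfin.eq_of_subset_of_encard_le' hIJ hcard
    have hbase : (M.Del D).IsBase J := by
      rw [show M.Del D = M ↾ R from rfl, isBase_restrict_iff (by exact diff_subset)]
      exact hJ
    have hdisj : Disjoint C J := by
      rw [← hIJ']
      exact (subset_diff.mp hI.subset).2.symm
    have : (M.Del D)✶.Indep C := by
      rw [dual_indep_iff_exists']
      exact ⟨by exact hCR, J, hbase, hdisj⟩
    exact hC.1.1 this
  have hfin' : M.eRk₀ (R \ C) ≠ ⊤ :=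
    fun h => hfin (top_le_iff.mp (h ▸ M.eRk₀_le_ground (R \ C)))
  exact (ENat.add_one_le_iff hfin').mpr (lt_of_le_of_ne hle hne)

lemma cocirc_point_rank (hC : (M.Del D).IsCocircuit₀ C) (hq : q ∈ C) :
    M.eRk₀ (((M.E \ D) \ C) ∪ {q}) = M.eRk₀ (M.E \ D) := by
  set R := M.E \ D with hR
  have hCR : C ⊆ R := by have := hC.1.2; exact this
  have hss : C \ {q} ⊂ C := sdiff_singleton_ssubset.mpr hq
  have hind : (M.Del D)✶.Indep (C \ {q}) := hC.2 hss
  rw [dual_indep_iff_exists'] at hind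
  obtain ⟨-, B, hB, hdisj⟩ := hind
  have hBbasis : M.IsBasis B R := by
    rwa [show M.Del D = M ↾ R from rfl, isBase_restrict_iff (by exact diff_subset)] at hB
  have hBsub : B ⊆ (R \ C) ∪ {q} := by
    intro b hb
    by_cases hbC : b ∈ C
    · right
      by_contra hbq
      exact (hdisj.symm.ne_of_mem hb ⟨hbC, hbq⟩) rfl
    · exact Or.inl ⟨hBbasis.subset hb, hbC⟩
  refine le_antisymm (M.eRk₀_mono (union_subset diff_subset (by simpa using hCR hq))) ?_
  rw [hBbasis.eRk₀_eq]
  exact encard_le_eRk₀ hBbasis.indep hBsub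

lemma encard_diff_ge {S P : Set α} {m k : ℕ∞} (h1 : m + k ≤ S.encard) (h2 : P.encard ≤ k)
    (hk : k ≠ ⊤) : m ≤ (S \ P).encard := by
  have h3 : S.encard ≤ (S \ P).encard + k := by
    rw [← encard_diff_add_encard_inter S P]
    exact add_le_add_right ((encard_mono inter_subset_right).trans h2) _
  exact (WithTop.add_le_add_iff_right hk).mp (h1.trans h3)

lemma isKSep_mk {P : Matroid α} {A B : Set α} {k : ℕ} (hd : Disjoint A B) (hu : A ∪ B = P.E)
    (hA : (k : ℕ∞) ≤ A.encard) (hB : (k : ℕ∞) ≤ B.encard)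
    (hr : P.eRk₀ A + P.eRk₀ B ≤ P.eRk₀ P.E + ((k - 1 : ℕ) : ℕ∞)) : P.IsKSep k A B := by
  refine ⟨hd, hu, hA, hB, ?_⟩
  have hBA : P.E \ A = B := by rw [← hu, union_diff_left, hd.symm.sdiff_eq_left]
  show P.eRk₀ A + P.eRk₀ (P.E \ A) ≤ _
  rw [hBA]
  exact hr

lemma isKSep_elim {P : Matroid α} {A B : Set α} {k : ℕ} (h : P.IsKSep k A B) :
    Disjoint A B ∧ A ∪ B = P.E ∧ (k : ℕ∞) ≤ A.encard ∧ (k : ℕ∞) ≤ B.encard ∧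
      P.eRk₀ A + P.eRk₀ B ≤ P.eRk₀ P.E + ((k - 1 : ℕ) : ℕ∞) := by
  obtain ⟨hd, hu, hA, hB, hr⟩ := h
  refine ⟨hd, hu, hA, hB, ?_⟩
  have hBA : P.E \ A = B := by rw [← hu, union_diff_left, hd.symm.sdiff_eq_left]
  rw [← hBA]
  exact hr

end Matroid

/-- `M\x\e` and `M\x` are 3-connected. -/
theorem statement_19 {α : Type u} (M : Matroid α) (hMbin : M.IsBinary)
    (hMi4 : M.InternallyFourConnected) (hcard : (11 : ℕ∞) ≤ M.E.encard)
    (e : α) (he : e ∈ M.E) (h44 : (M.Del {e}).FourKConnected 4)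
    (Q : Set α) (hQ : (M.Del {e}).IsQuad Q) (x : α) (hx : x ∈ Q) :
    ((M.Del {x}).Del {e}).ThreeConnected ∧ (M.Del {x}).ThreeConnected := by
  classical
  obtain ⟨hM3, -⟩ := hMi4
  obtain ⟨hN3, hN44⟩ := h44
  obtain ⟨hQc, hQcc, hQ4⟩ := hQ
  -- basic membership facts
  have hQE : Q ⊆ M.E \ {e} := hQc.1.2
  have hxEe : x ∈ M.E \ {e} := hQE hx
  have hxE : x ∈ M.E := hxEe.1
  have hxe : x ≠ e := by simpa using hxEe.2
  -- finiteness of the rank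
  have hfinE : M.eRk₀ M.E ≠ ⊤ := by
    intro htop
    have h2 : (1 : ℕ∞) < M.E.encard := lt_of_lt_of_le (by norm_num) hcard
    obtain ⟨a, b, haE, hbE, hab⟩ := Set.one_lt_encard_iff.mp h2
    have hpairE : ({a, b} : Set α) ⊆ M.E := by
      rintro y (rfl | hy)
      · exact haE
      · rw [Set.mem_singleton_iff] at hy; exact hy ▸ hbE
    refine hM3 2 (by norm_num) (by norm_num) {a, b} (M.E \ {a, b})
      (isKSep_mk disjoint_sdiff_right (union_diff_cancel hpairE) ?_ ?_ ?_)
    · rw [Set.encard_pair hab]; exact_mod_cast le_rfl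
    · have h4 : (2:ℕ∞) + 2 ≤ M.E.encard := le_trans (by norm_num) hcard
      have := encard_diff_ge h4 (le_of_eq (Set.encard_pair hab)) (by norm_num)
      exact_mod_cast this
    · rw [htop, top_add]; exact le_top
  have hfinAll : ∀ Z : Set α, M.eRk₀ Z ≠ ⊤ := fun Z h =>
    hfinE (top_le_iff.mp (h ▸ M.eRk₀_le_ground Z))
  -- size facts
  have hEe10 : (10 : ℕ∞) ≤ (M.E \ {e}).encard :=
    encard_diff_ge (by rw [show (10:ℕ∞) + 1 = 11 by norm_num]; exact hcard) (by simp)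
      ENat.one_ne_top
  have hEex9 : (9 : ℕ∞) ≤ ((M.E \ {e}) \ {x}).encard :=
    encard_diff_ge (by rw [show (9:ℕ∞) + 1 = 10 by norm_num]; exact hEe10) (by simp)
      ENat.one_ne_top
  -- separation helpers
  have hNg : (M.Del {e}).E = M.E \ {e} := rfl
  have hNrk : ∀ Z : Set α, Z ⊆ M.E \ {e} → (M.Del {e}).eRk₀ Z = M.eRk₀ Z :=
    fun _ hZ => del_eRk₀ hZ
  have no2sepM : ∀ A B : Set α, Disjoint A B → A ∪ B = M.E → (2:ℕ∞) ≤ A.encard →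
      (2:ℕ∞) ≤ B.encard → M.eRk₀ A + M.eRk₀ B ≤ M.eRk₀ M.E + 1 → False := by
    intro A B hd hu hA hB hr
    refine hM3 2 (by norm_num) (by norm_num) A B
      (isKSep_mk hd hu (by exact_mod_cast hA) (by exact_mod_cast hB) ?_)
    rw [show ((2 - 1 : ℕ) : ℕ∞) = 1 by norm_num]
    exact hr
  have no2sepN : ∀ A B : Set α, Disjoint A B → A ∪ B = M.E \ {e} → (2:ℕ∞) ≤ A.encard →
      (2:ℕ∞) ≤ B.encard → M.eRk₀ A + M.eRk₀ B ≤ M.eRk₀ (M.E \ {e}) + 1 → False := by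
    intro A B hd hu hA hB hr
    have hAs : A ⊆ M.E \ {e} := hu ▸ Set.subset_union_left
    have hBs : B ⊆ M.E \ {e} := hu ▸ Set.subset_union_right
    refine hN3 2 (by norm_num) (by norm_num) A B
      (isKSep_mk hd (by rw [hNg]; exact hu) (by exact_mod_cast hA) (by exact_mod_cast hB) ?_)
    rw [hNg, hNrk A hAs, hNrk B hBs, hNrk _ Subset.rfl,
      show ((2 - 1 : ℕ) : ℕ∞) = 1 by norm_num]
    exact hr
  have no3sepN44 : ∀ A B : Set α, Disjoint A B → A ∪ B = M.E \ {e} → (3:ℕ∞) ≤ A.encard →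
      (3:ℕ∞) ≤ B.encard → M.eRk₀ A + M.eRk₀ B ≤ M.eRk₀ (M.E \ {e}) + 2 →
      A.encard ≤ 4 ∨ B.encard ≤ 4 := by
    intro A B hd hu hA hB hr
    have hAs : A ⊆ M.E \ {e} := hu ▸ Set.subset_union_left
    have hBs : B ⊆ M.E \ {e} := hu ▸ Set.subset_union_right
    have := hN44 A B
      (isKSep_mk hd (by rw [hNg]; exact hu) (by exact_mod_cast hA) (by exact_mod_cast hB) ?_)
    · exact_mod_cast this
    · rw [hNg, hNrk A hAs, hNrk B hBs, hNrk _ Subset.rfl,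
        show ((3 - 1 : ℕ) : ℕ∞) = 2 by norm_num]
      exact hr
  -- quad facts
  have hQfin : Q.Finite := Set.encard_ne_top_iff.mp (by rw [hQ4]; norm_num)
  have hTQss : Q \ {x} ⊂ Q := Set.sdiff_singleton_ssubset.mpr hx
  have hTind : M.Indep (Q \ {x}) := (del_indep_iff.mp (hQc.2 hTQss)).1
  have hT3 : (Q \ {x}).encard = 3 := by
    have h := Set.encard_diff_singleton_add_one hx
    rw [hQ4, show (4:ℕ∞) = 3 + 1 by norm_num] at h
    exact WithTop.add_right_cancel ENat.one_ne_top h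
  have hrT : M.eRk₀ (Q \ {x}) = 3 := by rw [indep_eRk₀_eq hTind, hT3]
  have hinsTQ : insert x (Q \ {x}) = Q := by
    rw [Set.insert_diff_singleton, Set.insert_eq_of_mem hx]
  have hrQ : M.eRk₀ Q = 3 := by
    refine le_antisymm ?_ (by rw [← hrT]; exact M.eRk₀_mono diff_subset)
    refine eRk₀_le_of_forall fun J hJind hJQ => ?_
    by_contra hJ3
    have h4 : (4:ℕ∞) ≤ J.encard := by
      rw [show (4:ℕ∞) = 3 + 1 by norm_num]
      exact (ENat.add_one_le_iff (by norm_num)).mpr (lt_of_not_ge hJ3)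
    have hJQ' : J = Q := hQfin.eq_of_subset_of_encard_le' hJQ (by rw [hQ4]; exact h4)
    exact hQc.1.1 (del_indep_iff.mpr ⟨hJQ' ▸ hJind, hQE⟩)
  have hCC1 : M.eRk₀ ((M.E \ {e}) \ Q) + 1 ≤ M.eRk₀ (M.E \ {e}) :=
    cocirc_compl_rank hQcc hfinE
  have hCC2 : ∀ q ∈ Q, M.eRk₀ (((M.E \ {e}) \ Q) ∪ {q}) = M.eRk₀ (M.E \ {e}) :=
    fun q hq => cocirc_point_rank hQcc hq
  have habsorbT : ∀ A : Set α, Q \ {x} ⊆ A → A ⊆ M.E → M.eRk₀ (insert x A) ≤ M.eRk₀ A := by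
    intro A hTA hAE
    refine eRk₀_absorb ?_ hTA hAE hxE (by rw [hrT]; norm_num)
    rw [hinsTQ, hrQ, hrT]
  have hTsubEex : Q \ {x} ⊆ (M.E \ {e}) \ {x} := fun y hy => ⟨hQE hy.1, hy.2⟩
  -- key1 : a 2-separation of M\e\x with Q-x inside big side U gives a contradiction
  have key1 : ∀ U V : Set α, Disjoint U V → U ∪ V = (M.E \ {e}) \ {x} →
      (2:ℕ∞) ≤ V.encard → Q \ {x} ⊆ U →
      M.eRk₀ U + M.eRk₀ V ≤ M.eRk₀ ((M.E \ {e}) \ {x}) + 1 → False := by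
    intro U V hd hu hV2 hTU hr
    have hUs : U ⊆ (M.E \ {e}) \ {x} := hu ▸ Set.subset_union_left
    have hVs : V ⊆ (M.E \ {e}) \ {x} := hu ▸ Set.subset_union_right
    have hUE : U ⊆ M.E := fun y hy => ((hUs hy).1).1
    refine no2sepN (insert x U) V ?_ ?_ ?_ hV2 ?_
    · rw [Set.disjoint_left]
      rintro y (rfl | hyU)
      · exact fun hyV => (hVs hyV).2 rfl
      · exact fun hyV => hd.ne_of_mem hyU hyV rfl
    · rw [Set.insert_union, hu, Set.insert_diff_singleton, Set.insert_eq_of_mem hxEe]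
    · calc (2:ℕ∞) ≤ 3 := by norm_num
        _ = (Q \ {x}).encard := hT3.symm
        _ ≤ U.encard := Set.encard_mono hTU
        _ ≤ (insert x U).encard := Set.encard_mono (Set.subset_insert _ _)
    · calc M.eRk₀ (insert x U) + M.eRk₀ V ≤ M.eRk₀ U + M.eRk₀ V :=
          add_le_add_left (habsorbT U hTU hUE) _
        _ ≤ M.eRk₀ ((M.E \ {e}) \ {x}) + 1 := hr
        _ ≤ M.eRk₀ (M.E \ {e}) + 1 := add_le_add_left (M.eRk₀_mono diff_subset) _
  -- key2 : 2-separation of M\e\x where U holds ≥2 elements of the triad Q-x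
  have key2 : ∀ U V : Set α, Disjoint U V → U ∪ V = (M.E \ {e}) \ {x} →
      (2:ℕ∞) ≤ U.encard → (2:ℕ∞) ≤ V.encard →
      M.eRk₀ U + M.eRk₀ V ≤ M.eRk₀ ((M.E \ {e}) \ {x}) + 1 →
      (2:ℕ∞) ≤ ((Q \ {x}) ∩ U).encard → False := by
    intro U V hd hu hU2 hV2 hr hTU2
    have hUs : U ⊆ (M.E \ {e}) \ {x} := hu ▸ Set.subset_union_left
    have hVs : V ⊆ (M.E \ {e}) \ {x} := hu ▸ Set.subset_union_right
    by_cases hTU : Q \ {x} ⊆ U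
    · exact key1 U V hd hu hV2 hTU hr
    obtain ⟨q, hqT, hqU⟩ := Set.not_subset.mp hTU
    have hqV : q ∈ V := by
      have hmem : q ∈ U ∪ V := by rw [hu]; exact hTsubEex hqT
      exact hmem.resolve_left hqU
    have hqQ : q ∈ Q := hqT.1
    have hqE : q ∈ M.E := (hQE hqQ).1
    have hqEe : q ∈ M.E \ {e} := hQE hqQ
    have hqx : q ≠ x := by simpa using hqT.2
    -- (Q\x) ∩ V = {q}
    have hsum : ((Q \ {x}) ∩ U).encard + ((Q \ {x}) ∩ V).encard = 3 := by
      rw [← Set.encard_union_eq (hd.mono Set.inter_subset_right Set.inter_subset_right),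
        ← Set.inter_union_distrib_left, hu, Set.inter_eq_self_of_subset_left hTsubEex, hT3]
    have hTV1 : (Q \ {x}) ∩ V ⊆ {q} := by
      have hle1 : ((Q \ {x}) ∩ V).encard ≤ 1 := by
        by_contra hcon
        have h2' : (2:ℕ∞) ≤ ((Q \ {x}) ∩ V).encard := by
          rw [show (2:ℕ∞) = 1 + 1 by norm_num]
          exact (ENat.add_one_le_iff ENat.one_ne_top).mpr (lt_of_not_ge hcon)
        have habs : (4:ℕ∞) ≤ 3 := by
          calc (4:ℕ∞) = 2 + 2 := by norm_num
            _ ≤ _ + _ := add_le_add hTU2 h2'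
            _ = 3 := hsum
        norm_num at habs
      intro y hy
      have := Set.encard_le_one_iff.mp hle1 y q hy ⟨hqT, hqV⟩
      simp [this]
    have hVq_sub : V \ {q} ⊆ (M.E \ {e}) \ Q := by
      intro y hy
      have hyEex := hVs hy.1
      refine ⟨hyEex.1, fun hyQ => ?_⟩
      have hyq : y ∈ ({q} : Set α) := hTV1 ⟨⟨hyQ, hyEex.2⟩, hy.1⟩
      exact hy.2 hyq
    have hVins : insert q (V \ {q}) = V := by
      rw [Set.insert_diff_singleton, Set.insert_eq_of_mem hqV]
    have hnotcl : ¬ (M.eRk₀ (insert q (V \ {q})) ≤ M.eRk₀ (V \ {q})) := by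
      intro hcon
      have habs := eRk₀_absorb hcon hVq_sub (fun y hy => hy.1.1) hqE (hfinAll _)
      have h2' := hCC2 q hqQ
      rw [Set.union_singleton] at h2'
      have hbad : M.eRk₀ ((M.E \ {e}) \ Q) + 1 ≤ M.eRk₀ ((M.E \ {e}) \ Q) := by
        calc M.eRk₀ ((M.E \ {e}) \ Q) + 1 ≤ M.eRk₀ (M.E \ {e}) := hCC1
          _ = M.eRk₀ (insert q ((M.E \ {e}) \ Q)) := h2'.symm
          _ ≤ M.eRk₀ ((M.E \ {e}) \ Q) := habs
      exact absurd ((ENat.add_one_le_iff (hfinAll _)).mp hbad) (lt_irrefl _)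
    have hVrk : M.eRk₀ V = M.eRk₀ (V \ {q}) + 1 := by
      refine le_antisymm ?_ ?_
      · have hins := M.eRk₀_insert_le q (V \ {q})
        rwa [hVins] at hins
      refine (ENat.add_one_le_iff (hfinAll _)).mpr (lt_of_not_ge fun hcon => hnotcl ?_)
      rw [hVins]; exact hcon
    have hr' : M.eRk₀ (insert q U) + M.eRk₀ (V \ {q}) ≤ M.eRk₀ ((M.E \ {e}) \ {x}) + 1 := by
      calc M.eRk₀ (insert q U) + M.eRk₀ (V \ {q}) ≤ (M.eRk₀ U + 1) + M.eRk₀ (V \ {q}) :=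
          add_le_add_left (M.eRk₀_insert_le q U) _
        _ = M.eRk₀ U + (M.eRk₀ (V \ {q}) + 1) := by ring
        _ = M.eRk₀ U + M.eRk₀ V := by rw [← hVrk]
        _ ≤ _ := hr
    by_cases hV2' : (2:ℕ∞) ≤ (V \ {q}).encard
    · refine key1 (insert q U) (V \ {q}) ?_ ?_ hV2' ?_ hr'
      · rw [Set.disjoint_left]
        rintro y (rfl | hyU)
        · exact fun hy => hy.2 rfl
        · exact fun hy => hd.ne_of_mem hyU hy.1 rfl
      · rw [Set.insert_union, ← Set.union_insert, hVins, hu]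
      · intro y hy
        have hmem : y ∈ U ∪ V := by rw [hu]; exact hTsubEex hy
        rcases hmem with h | h
        · exact Set.mem_insert_of_mem _ h
        · have hyq : y ∈ ({q} : Set α) := hTV1 ⟨hy, h⟩
          rw [Set.mem_singleton_iff] at hyq
          exact hyq ▸ Set.mem_insert _ _
    · -- V = {q, v}
      have hV1le : (V \ {q}).encard ≤ 1 := by
        rw [show (2:ℕ∞) = 1 + 1 by norm_num] at hV2'
        exact (ENat.lt_add_one_iff ENat.one_ne_top).mp (lt_of_not_ge hV2')
      have hplus := Set.encard_diff_singleton_add_one hqV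
      have hV1ge : (1:ℕ∞) ≤ (V \ {q}).encard := by
        by_contra hcon
        have h0 : (V \ {q}).encard = 0 := by
          have := lt_of_not_ge hcon
          rw [show (1:ℕ∞) = 0 + 1 by norm_num] at this
          exact nonpos_iff_eq_zero.mp ((ENat.lt_add_one_iff (by norm_num)).mp this)
        rw [h0, zero_add] at hplus
        rw [← hplus] at hV2
        norm_num at hV2
      have hVq1 : (V \ {q}).encard = 1 := le_antisymm hV1le hV1ge
      obtain ⟨v, hv⟩ := Set.encard_eq_one.mp hVq1
      have hvVq : v ∈ V \ {q} := by rw [hv]; exact rfl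
      have hvV : v ∈ V := hvVq.1
      have hvq : v ≠ q := by simpa using hvVq.2
      have hVqv : V = {q, v} := by rw [← hVins, hv]
      have hvEex := hVs hvV
      have hvx : v ≠ x := by simpa using hvEex.2
      have hvE : v ∈ M.E := hvEex.1.1
      have hvQ : v ∉ Q := by
        intro hvQ
        have hyq : v ∈ ({q} : Set α) := hTV1 ⟨⟨hvQ, by simpa using hvx⟩, hvV⟩
        exact hvq (by simpa using hyq)
      rcases le_or_gt (M.eRk₀ {q, v}) 1 with hqv1 | hqv2
      · -- q,v parallel-ish: 2-separation of M\e
        refine no2sepN {q, v} (insert x U) ?_ ?_ ?_ ?_ ?_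
        · rw [Set.disjoint_left]
          rintro y (rfl | hy)
          · rintro (rfl | hyU)
            · exact hqx rfl
            · exact hqU hyU
          · rw [Set.mem_singleton_iff] at hy
            subst hy
            rintro (rfl | hyU)
            · exact hvx rfl
            · exact hd.ne_of_mem hyU hvV rfl
        · rw [Set.union_insert, Set.union_comm _ U, ← hVqv, hu,
            Set.insert_diff_singleton, Set.insert_eq_of_mem hxEe]
        · rw [Set.encard_pair (fun h => hvq h.symm)]
        · calc (2:ℕ∞) ≤ U.encard := hU2
            _ ≤ _ := Set.encard_mono (Set.subset_insert _ _)
        · calc M.eRk₀ {q, v} + M.eRk₀ (insert x U)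
              ≤ 1 + M.eRk₀ (M.E \ {e}) := by
                refine add_le_add hqv1 (M.eRk₀_mono ?_)
                rintro y (rfl | hyU)
                · exact hxEe
                · exact (hUs hyU).1
            _ = M.eRk₀ (M.E \ {e}) + 1 := by ring
      · -- r{q,v} = 2 : use the quad and submodularity of the connectivity
        have h2qv : (2:ℕ∞) ≤ M.eRk₀ {q, v} := by
          rw [show (2:ℕ∞) = 1 + 1 by norm_num]
          exact (ENat.add_one_le_iff ENat.one_ne_top).mpr hqv2
        have hrV' : M.eRk₀ U + M.eRk₀ {q, v} ≤ M.eRk₀ ((M.E \ {e}) \ {x}) + 1 := by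
          rw [← hVqv]; exact hr
        have hrU1 : M.eRk₀ U + 1 ≤ M.eRk₀ ((M.E \ {e}) \ {x}) := by
          have h1 : (M.eRk₀ U + 1) + 1 ≤ M.eRk₀ ((M.E \ {e}) \ {x}) + 1 := by
            calc (M.eRk₀ U + 1) + 1 = M.eRk₀ U + 2 := by ring
              _ ≤ M.eRk₀ U + M.eRk₀ {q, v} := add_le_add_right h2qv _
              _ ≤ _ := hrV'
          exact (WithTop.add_le_add_iff_right ENat.one_ne_top).mp h1
        have hU_eq : (M.E \ {e}) \ {q, v, x} = U := by
          ext y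
          constructor
          · rintro ⟨hyEe, hyn⟩
            have hyx : y ≠ x := fun h => hyn (by simp [h])
            have hmem : y ∈ U ∪ V := by
              rw [hu]; exact ⟨hyEe, by simpa using hyx⟩
            rcases hmem with h | h
            · exact h
            · exfalso
              rw [hVqv] at h
              rcases h with rfl | h
              · exact hyn (by simp)
              · rw [Set.mem_singleton_iff] at h
                exact hyn (by simp [h])
          · intro hyU
            refine ⟨(hUs hyU).1, ?_⟩
            rintro (rfl | rfl | rfl)
            · exact hqU hyU
            · exact hd.ne_of_mem hyU hvV rfl
            · exact (hUs hyU).2 rfl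
        have hlamB : M.eRk₀ {q, v, x} + M.eRk₀ U ≤ M.eRk₀ (M.E \ {e}) + 2 := by
          have h3 : M.eRk₀ {q, v, x} ≤ 3 := by
            refine (M.eRk₀_le_encard _).trans ?_
            calc ({q, v, x} : Set α).encard ≤ ({v, x} : Set α).encard + 1 :=
                Set.encard_insert_le _ _
              _ ≤ (({x} : Set α).encard + 1) + 1 :=
                add_le_add_left (Set.encard_insert_le _ _) _
              _ = 3 := by rw [Set.encard_singleton]; norm_num
          calc M.eRk₀ {q, v, x} + M.eRk₀ U ≤ 3 + M.eRk₀ U := add_le_add_left h3 _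
            _ = (M.eRk₀ U + 1) + 2 := by ring
            _ ≤ M.eRk₀ ((M.E \ {e}) \ {x}) + 2 := add_le_add_left hrU1 _
            _ ≤ M.eRk₀ (M.E \ {e}) + 2 := add_le_add_left (M.eRk₀_mono diff_subset) _
        have hfinEe1 : M.eRk₀ (M.E \ {e}) + 1 ≠ ⊤ :=
          WithTop.add_ne_top.mpr ⟨hfinAll _, ENat.one_ne_top⟩
        have hB2 : M.eRk₀ (M.E \ {e}) + 2 ≤ M.eRk₀ {q, x} + M.eRk₀ ((M.E \ {e}) \ {q, x}) := by
          by_contra hcon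
          push_neg at hcon
          have hle : M.eRk₀ {q, x} + M.eRk₀ ((M.E \ {e}) \ {q, x}) ≤ M.eRk₀ (M.E \ {e}) + 1 := by
            rw [show M.eRk₀ (M.E \ {e}) + 2 = (M.eRk₀ (M.E \ {e}) + 1) + 1 by ring] at hcon
            exact (ENat.lt_add_one_iff hfinEe1).mp hcon
          refine no2sepN {q, x} ((M.E \ {e}) \ {q, x}) disjoint_sdiff_right
            (Set.union_diff_cancel ?_) ?_ ?_ hle
          · rintro y (rfl | hy)
            · exact hqEe
            · rw [Set.mem_singleton_iff] at hy; exact hy ▸ hxEe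
          · rw [Set.encard_pair hqx]
          · refine le_trans (by norm_num : (2:ℕ∞) ≤ 8) ?_
            refine encard_diff_ge ?_ (le_of_eq (Set.encard_pair hqx)) (by norm_num)
            rw [show (8:ℕ∞) + 2 = 10 by norm_num]
            exact hEe10
        -- set identities for submodularity
        have hid1 : Q ∪ {q, v, x} = insert v Q := by
          ext y
          simp only [Set.mem_union, Set.mem_insert_iff, Set.mem_singleton_iff]
          constructor
          · rintro (h | rfl | rfl | rfl)
            · exact Or.inr h
            · exact Or.inr hqQ
            · exact Or.inl rfl
            · exact Or.inr hx
          · rintro (rfl | h)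
            · exact Or.inr (Or.inr (Or.inl rfl))
            · exact Or.inl h
        have hid2 : Q ∩ {q, v, x} = {q, x} := by
          ext y
          simp only [Set.mem_inter_iff, Set.mem_insert_iff, Set.mem_singleton_iff]
          constructor
          · rintro ⟨hyQ, (rfl | rfl | rfl)⟩
            · exact Or.inl rfl
            · exact absurd hyQ hvQ
            · exact Or.inr rfl
          · rintro (rfl | rfl)
            · exact ⟨hqQ, Or.inl rfl⟩
            · exact ⟨hx, Or.inr (Or.inr rfl)⟩
        have hidc1 : ((M.E \ {e}) \ Q) ∩ ((M.E \ {e}) \ {q, v, x})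
            = (M.E \ {e}) \ (insert v Q) := by
          rw [diff_inter_diff, hid1]
        have hidc2 : ((M.E \ {e}) \ Q) ∪ ((M.E \ {e}) \ {q, v, x})
            = (M.E \ {e}) \ {q, x} := by
          rw [← diff_inter, hid2]
        have hQE' : Q ⊆ M.E := fun y hy => (hQE hy).1
        have hqvxE : ({q, v, x} : Set α) ⊆ M.E := by
          rintro y (rfl | rfl | rfl)
          exacts [hqE, hvE, hxE]
        have hsub1 := M.eRk₀_submod hQE' hqvxE
        have hsub2 := M.eRk₀_submod (X := (M.E \ {e}) \ Q) (Y := (M.E \ {e}) \ {q, v, x})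
          (diff_subset.trans diff_subset) (diff_subset.trans diff_subset)
        rw [hid1, hid2] at hsub1
        rw [hidc1, hidc2] at hsub2
        have hlamA : M.eRk₀ Q + M.eRk₀ ((M.E \ {e}) \ Q) ≤ M.eRk₀ (M.E \ {e}) + 2 := by
          rw [hrQ]
          calc (3:ℕ∞) + M.eRk₀ ((M.E \ {e}) \ Q)
              = (M.eRk₀ ((M.E \ {e}) \ Q) + 1) + 2 := by ring
            _ ≤ M.eRk₀ (M.E \ {e}) + 2 := add_le_add_left hCC1 _
        have hcomb : (M.eRk₀ (insert v Q) + M.eRk₀ ((M.E \ {e}) \ insert v Q))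
            + (M.eRk₀ (M.E \ {e}) + 2)
            ≤ (M.eRk₀ (M.E \ {e}) + 2) + (M.eRk₀ (M.E \ {e}) + 2) := by
          calc (M.eRk₀ (insert v Q) + M.eRk₀ ((M.E \ {e}) \ insert v Q))
                + (M.eRk₀ (M.E \ {e}) + 2)
              ≤ (M.eRk₀ (insert v Q) + M.eRk₀ ((M.E \ {e}) \ insert v Q))
                + (M.eRk₀ {q, x} + M.eRk₀ ((M.E \ {e}) \ {q, x})) := add_le_add_right hB2 _
            _ = (M.eRk₀ (insert v Q) + M.eRk₀ {q, x})
                + (M.eRk₀ ((M.E \ {e}) \ {q, x}) + M.eRk₀ ((M.E \ {e}) \ insert v Q)) := by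
                ring
            _ ≤ (M.eRk₀ Q + M.eRk₀ {q, v, x})
                + (M.eRk₀ ((M.E \ {e}) \ Q) + M.eRk₀ ((M.E \ {e}) \ {q, v, x})) :=
                add_le_add hsub1 hsub2
            _ = (M.eRk₀ Q + M.eRk₀ ((M.E \ {e}) \ Q))
                + (M.eRk₀ {q, v, x} + M.eRk₀ ((M.E \ {e}) \ {q, v, x})) := by ring
            _ ≤ (M.eRk₀ (M.E \ {e}) + 2) + (M.eRk₀ (M.E \ {e}) + 2) := by
                refine add_le_add hlamA ?_
                rw [hU_eq]
                exact hlamB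
        have hfin2 : M.eRk₀ (M.E \ {e}) + 2 ≠ ⊤ :=
          WithTop.add_ne_top.mpr ⟨hfinAll _, by exact ENat.coe_ne_top 2⟩
        have hfinal : M.eRk₀ (insert v Q) + M.eRk₀ ((M.E \ {e}) \ insert v Q)
            ≤ M.eRk₀ (M.E \ {e}) + 2 :=
          (WithTop.add_le_add_iff_right hfin2).mp hcomb
        have hWE : insert v Q ⊆ M.E \ {e} := Set.insert_subset hvEex.1 hQE
        have hW5 : (insert v Q).encard = 5 := by
          rw [Set.encard_insert_of_notMem hvQ, hQ4]
          norm_num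
        have h5c : (5:ℕ∞) ≤ ((M.E \ {e}) \ insert v Q).encard := by
          refine encard_diff_ge ?_ (le_of_eq hW5) (by norm_num)
          rw [show (5:ℕ∞) + 5 = 10 by norm_num]
          exact hEe10
        rcases no3sepN44 (insert v Q) ((M.E \ {e}) \ insert v Q) disjoint_sdiff_right
          (Set.union_diff_cancel hWE) (by rw [hW5]; norm_num)
          (le_trans (by norm_num) h5c) hfinal with hcon | hcon
        · rw [hW5] at hcon; norm_num at hcon
        · have hbad := le_trans h5c hcon; norm_num at hbad
  -- key0 : no 2-separation of M\e\x at all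
  have key0 : ∀ U V : Set α, Disjoint U V → U ∪ V = (M.E \ {e}) \ {x} →
      (2:ℕ∞) ≤ U.encard → (2:ℕ∞) ≤ V.encard →
      M.eRk₀ U + M.eRk₀ V ≤ M.eRk₀ ((M.E \ {e}) \ {x}) + 1 → False := by
    intro U V hd hu hU hV hr
    have hsum : ((Q \ {x}) ∩ U).encard + ((Q \ {x}) ∩ V).encard = 3 := by
      rw [← Set.encard_union_eq (hd.mono Set.inter_subset_right Set.inter_subset_right),
        ← Set.inter_union_distrib_left, hu, Set.inter_eq_self_of_subset_left hTsubEex, hT3]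
    have hcover : (2:ℕ∞) ≤ ((Q \ {x}) ∩ U).encard ∨ (2:ℕ∞) ≤ ((Q \ {x}) ∩ V).encard := by
      by_contra hcon
      push_neg at hcon
      obtain ⟨h1, h2⟩ := hcon
      have h1' : ((Q \ {x}) ∩ U).encard ≤ 1 := by
        rw [show (2:ℕ∞) = 1 + 1 by norm_num] at h1
        exact (ENat.lt_add_one_iff ENat.one_ne_top).mp h1
      have h2' : ((Q \ {x}) ∩ V).encard ≤ 1 := by
        rw [show (2:ℕ∞) = 1 + 1 by norm_num] at h2
        exact (ENat.lt_add_one_iff ENat.one_ne_top).mp h2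
      have hbad : (3:ℕ∞) ≤ 2 := by
        calc (3:ℕ∞) = _ := hsum.symm
          _ ≤ 1 + 1 := add_le_add h1' h2'
          _ = 2 := by norm_num
      norm_num at hbad
    rcases hcover with h | h
    · exact key2 U V hd hu hU hV hr h
    · exact key2 V U hd.symm (by rw [Set.union_comm]; exact hu) hV hU
        (by rw [add_comm]; exact hr) h
  -- no 1-separation of M\e\x
  have key1sep : ∀ U V : Set α, Disjoint U V → U ∪ V = (M.E \ {e}) \ {x} →
      (1:ℕ∞) ≤ U.encard → (1:ℕ∞) ≤ V.encard →
      M.eRk₀ U + M.eRk₀ V ≤ M.eRk₀ ((M.E \ {e}) \ {x}) → False := by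
    intro U V hd hu hU hV hr
    have build : ∀ A B : Set α, Disjoint A B → A ∪ B = (M.E \ {e}) \ {x} →
        (2:ℕ∞) ≤ A.encard → (1:ℕ∞) ≤ B.encard →
        M.eRk₀ A + M.eRk₀ B ≤ M.eRk₀ ((M.E \ {e}) \ {x}) → False := by
      intro A B hd hu hA hB hr
      have hAs : A ⊆ (M.E \ {e}) \ {x} := hu ▸ Set.subset_union_left
      have hBs : B ⊆ (M.E \ {e}) \ {x} := hu ▸ Set.subset_union_right
      refine no2sepN A (insert x B) ?_ ?_ hA ?_ ?_
      · rw [Set.disjoint_left]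
        intro y hyA
        rintro (rfl | hyB)
        · exact (hAs hyA).2 rfl
        · exact hd.ne_of_mem hyA hyB rfl
      · rw [Set.union_insert, hu, Set.insert_diff_singleton, Set.insert_eq_of_mem hxEe]
      · calc (2:ℕ∞) = 1 + 1 := by norm_num
          _ ≤ B.encard + 1 := add_le_add_left hB _
          _ = (insert x B).encard :=
            (Set.encard_insert_of_notMem fun h => (hBs h).2 rfl).symm
      · calc M.eRk₀ A + M.eRk₀ (insert x B) ≤ M.eRk₀ A + (M.eRk₀ B + 1) :=
            add_le_add_right (M.eRk₀_insert_le _ _) _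
          _ = (M.eRk₀ A + M.eRk₀ B) + 1 := by ring
          _ ≤ M.eRk₀ ((M.E \ {e}) \ {x}) + 1 := add_le_add_left hr _
          _ ≤ M.eRk₀ (M.E \ {e}) + 1 := add_le_add_left (M.eRk₀_mono diff_subset) _
    rcases le_or_gt 2 U.encard with h2 | h2
    · exact build U V hd hu h2 hV hr
    · have hU1 : U.encard ≤ 1 := by
        rw [show (2:ℕ∞) = 1 + 1 by norm_num] at h2
        exact (ENat.lt_add_one_iff ENat.one_ne_top).mp h2
      have hV2 : (2:ℕ∞) ≤ V.encard := by
        by_contra hcon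
        have hV1 : V.encard ≤ 1 := by
          rw [show (2:ℕ∞) = 1 + 1 by norm_num] at hcon
          exact (ENat.lt_add_one_iff ENat.one_ne_top).mp (lt_of_not_ge hcon)
        have hbad : (9:ℕ∞) ≤ 2 := by
          calc (9:ℕ∞) ≤ ((M.E \ {e}) \ {x}).encard := hEex9
            _ = U.encard + V.encard := by rw [← hu, Set.encard_union_eq hd]
            _ ≤ 1 + 1 := add_le_add hU1 hV1
            _ = 2 := by norm_num
        norm_num at hbad
      exact build V U hd.symm (by rw [Set.union_comm]; exact hu) hV2 hU
        (by rw [add_comm]; exact hr)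
  -- first conclusion : M\x\e is 3-connected
  have hNx3 : ((M.Del {x}).Del {e}).ThreeConnected := by
    intro k hk0 hk3 X Y hsep
    obtain ⟨hd, hu, hX, hY, hrr⟩ := isKSep_elim hsep
    have hg : ((M.Del {x}).Del {e}).E = (M.E \ {e}) \ {x} := by
      show (M.E \ {x}) \ {e} = _
      exact diff_diff_comm
    have hXs : X ⊆ (M.E \ {e}) \ {x} := by
      have h := hu ▸ Set.subset_union_left (s := X) (t := Y)
      rwa [hg] at h
    have hYs : Y ⊆ (M.E \ {e}) \ {x} := by
      have h := hu ▸ Set.subset_union_right (s := X) (t := Y)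
      rwa [hg] at h
    have hrk : ∀ Z : Set α, Z ⊆ (M.E \ {e}) \ {x} → ((M.Del {x}).Del {e}).eRk₀ Z = M.eRk₀ Z := by
      intro Z hZ
      have hZ' : Z ⊆ (M.E \ {x}) \ {e} := by rw [diff_diff_comm]; exact hZ
      rw [del_eRk₀ (show Z ⊆ (M.Del {x}).E \ {e} from hZ'), del_eRk₀ (hZ'.trans diff_subset)]
    rw [hg] at hrr
    rw [hrk X hXs, hrk Y hYs, hrk _ Subset.rfl] at hrr
    interval_cases k
    · refine key1sep X Y hd (hu.trans hg) (by exact_mod_cast hX) (by exact_mod_cast hY) ?_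
      simpa using hrr
    · refine key0 X Y hd (hu.trans hg) (by exact_mod_cast hX) (by exact_mod_cast hY) ?_
      rwa [show ((2 - 1 : ℕ) : ℕ∞) = 1 by norm_num] at hrr
  -- second conclusion : M\x is 3-connected
  have hMx3 : (M.Del {x}).ThreeConnected := by
    have hMg : (M.Del {x}).E = M.E \ {x} := rfl
    have hMrk : ∀ Z : Set α, Z ⊆ M.E \ {x} → (M.Del {x}).eRk₀ Z = M.eRk₀ Z :=
      fun _ hZ => del_eRk₀ hZ
    have hex : e ≠ x := fun h => hxe h.symm
    have heEx : e ∈ M.E \ {x} := ⟨he, by simpa using hex⟩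
    -- no 1-separation builder for M
    have build1 : ∀ A B : Set α, Disjoint A B → A ∪ B = M.E \ {x} →
        (2:ℕ∞) ≤ A.encard → (1:ℕ∞) ≤ B.encard →
        M.eRk₀ A + M.eRk₀ B ≤ M.eRk₀ (M.E \ {x}) → False := by
      intro A B hd hu hA hB hr
      have hAs : A ⊆ M.E \ {x} := hu ▸ Set.subset_union_left
      have hBs : B ⊆ M.E \ {x} := hu ▸ Set.subset_union_right
      refine no2sepM A (insert x B) ?_ ?_ hA ?_ ?_
      · rw [Set.disjoint_left]
        intro y hyA
        rintro (rfl | hyB)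
        · exact (hAs hyA).2 rfl
        · exact hd.ne_of_mem hyA hyB rfl
      · rw [Set.union_insert, hu, Set.insert_diff_singleton, Set.insert_eq_of_mem hxE]
      · calc (2:ℕ∞) = 1 + 1 := by norm_num
          _ ≤ B.encard + 1 := add_le_add_left hB _
          _ = (insert x B).encard :=
            (Set.encard_insert_of_notMem fun h => (hBs h).2 rfl).symm
      · calc M.eRk₀ A + M.eRk₀ (insert x B) ≤ M.eRk₀ A + (M.eRk₀ B + 1) :=
            add_le_add_right (M.eRk₀_insert_le _ _) _
          _ = (M.eRk₀ A + M.eRk₀ B) + 1 := by ring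
          _ ≤ M.eRk₀ (M.E \ {x}) + 1 := add_le_add_left hr _
          _ ≤ M.eRk₀ M.E + 1 := add_le_add_left (M.eRk₀_mono diff_subset) _
    have hEx10 : (10:ℕ∞) ≤ (M.E \ {x}).encard :=
      encard_diff_ge (by rw [show (10:ℕ∞) + 1 = 11 by norm_num]; exact hcard) (by simp)
        ENat.one_ne_top
    -- the 2-separation case, with e in the side U
    have main2aux : ∀ U V : Set α, Disjoint U V → U ∪ V = M.E \ {x} →
        (2:ℕ∞) ≤ U.encard → (2:ℕ∞) ≤ V.encard →
        M.eRk₀ U + M.eRk₀ V ≤ M.eRk₀ (M.E \ {x}) + 1 → e ∈ U → False := by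
      intro U V hd hu hU2 hV2 hr heU
      have hUs : U ⊆ M.E \ {x} := hu ▸ Set.subset_union_left
      have hVs : V ⊆ M.E \ {x} := hu ▸ Set.subset_union_right
      have hUE : U ⊆ M.E := fun y hy => (hUs hy).1
      have hu1 : U ∪ ((M.E \ {x}) \ {e}) = M.E \ {x} := by
        apply Set.Subset.antisymm
        · exact Set.union_subset hUs diff_subset
        · intro y hy
          by_cases hye : y = e
          · exact Or.inl (hye ▸ heU)
          · exact Or.inr ⟨hy, by simpa using hye⟩
      have hu2 : U ∩ ((M.E \ {x}) \ {e}) = U \ {e} := by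
        ext y
        constructor
        · rintro ⟨hyU, -, hye⟩; exact ⟨hyU, hye⟩
        · rintro ⟨hyU, hye⟩; exact ⟨hyU, hUs hyU, hye⟩
      have hsubm := M.eRk₀_submod (X := U) (Y := (M.E \ {x}) \ {e}) hUE
        (diff_subset.trans diff_subset)
      rw [hu1, hu2] at hsubm
      have hkey : M.eRk₀ (U \ {e}) + M.eRk₀ V ≤ M.eRk₀ ((M.E \ {x}) \ {e}) + 1 := by
        have h1 : (M.eRk₀ (U \ {e}) + M.eRk₀ V) + M.eRk₀ (M.E \ {x})
            ≤ (M.eRk₀ ((M.E \ {x}) \ {e}) + 1) + M.eRk₀ (M.E \ {x}) := by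
          calc (M.eRk₀ (U \ {e}) + M.eRk₀ V) + M.eRk₀ (M.E \ {x})
              = (M.eRk₀ (M.E \ {x}) + M.eRk₀ (U \ {e})) + M.eRk₀ V := by ring
            _ ≤ (M.eRk₀ U + M.eRk₀ ((M.E \ {x}) \ {e})) + M.eRk₀ V := add_le_add_left hsubm _
            _ = (M.eRk₀ U + M.eRk₀ V) + M.eRk₀ ((M.E \ {x}) \ {e}) := by ring
            _ ≤ (M.eRk₀ (M.E \ {x}) + 1) + M.eRk₀ ((M.E \ {x}) \ {e}) := add_le_add_left hr _
            _ = (M.eRk₀ ((M.E \ {x}) \ {e}) + 1) + M.eRk₀ (M.E \ {x}) := by ring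
        exact (WithTop.add_le_add_iff_right (hfinAll _)).mp h1
      by_cases h2 : (2:ℕ∞) ≤ (U \ {e}).encard
      · refine key0 (U \ {e}) V (hd.mono_left diff_subset) ?_ h2 hV2 ?_
        · have hUV : (U \ {e}) ∪ V = (M.E \ {x}) \ {e} := by
            ext y
            constructor
            · rintro (⟨hyU, hye⟩ | hyV)
              · exact ⟨hUs hyU, hye⟩
              · exact ⟨hVs hyV, by simpa using (hd.ne_of_mem heU hyV).symm⟩
            · rintro ⟨hyEx, hye⟩
              have hmem : y ∈ U ∪ V := by rw [hu]; exact hyEx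
              rcases hmem with h | h
              · exact Or.inl ⟨h, hye⟩
              · exact Or.inr h
          rw [hUV, diff_diff_comm]
        · rwa [diff_diff_comm (s := M.E) (t := {x}) (u := {e})] at hkey
      · -- U = {e, u}
        have hU1 : (U \ {e}).encard = 1 := by
          have hle : (U \ {e}).encard ≤ 1 := by
            rw [show (2:ℕ∞) = 1 + 1 by norm_num] at h2
            exact (ENat.lt_add_one_iff ENat.one_ne_top).mp (lt_of_not_ge h2)
          have hplus := Set.encard_diff_singleton_add_one heU
          have hge : (1:ℕ∞) ≤ (U \ {e}).encard := by
            by_contra hcon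
            have h0 : (U \ {e}).encard = 0 := by
              have hlt := lt_of_not_ge hcon
              rw [show (1:ℕ∞) = 0 + 1 by norm_num] at hlt
              exact nonpos_iff_eq_zero.mp ((ENat.lt_add_one_iff (by norm_num)).mp hlt)
            rw [h0, zero_add] at hplus
            rw [← hplus] at hU2
            norm_num at hU2
          exact le_antisymm hle hge
        obtain ⟨u, hu'⟩ := Set.encard_eq_one.mp hU1
        have huUe : u ∈ U \ {e} := by rw [hu']; exact rfl
        have huU : u ∈ U := huUe.1
        have hune : u ≠ e := by simpa using huUe.2
        have hUeu : U = {e, u} := by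
          have h1 : insert e (U \ {e}) = U := by
            rw [Set.insert_diff_singleton, Set.insert_eq_of_mem heU]
          rw [← h1, hu']
        have huEx := hUs huU
        have hux : u ≠ x := by simpa using huEx.2
        have huE : u ∈ M.E := huEx.1
        rcases le_or_gt (M.eRk₀ {e, u}) 1 with h1' | h2'
        · -- e,u parallel-ish : 2-separation of M
          refine no2sepM {e, u} (insert x V) ?_ ?_ ?_ ?_ ?_
          · rw [Set.disjoint_left]
            rintro y (rfl | hy)
            · rintro (rfl | hyV)
              · exact hex rfl
              · exact hd.ne_of_mem heU hyV rfl
            · rw [Set.mem_singleton_iff] at hy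
              subst hy
              rintro (rfl | hyV)
              · exact hux rfl
              · exact hd.ne_of_mem huU hyV rfl
          · rw [Set.union_insert, ← hUeu, hu, Set.insert_diff_singleton,
              Set.insert_eq_of_mem hxE]
          · rw [Set.encard_pair (fun h => hune h.symm)]
          · calc (2:ℕ∞) ≤ V.encard := hV2
              _ ≤ _ := Set.encard_mono (Set.subset_insert _ _)
          · calc M.eRk₀ {e, u} + M.eRk₀ (insert x V)
                ≤ 1 + M.eRk₀ M.E := by
                  refine add_le_add h1' (M.eRk₀_mono ?_)
                  exact Set.insert_subset hxE (fun y hy => (hVs hy).1)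
              _ = M.eRk₀ M.E + 1 := by ring
        · have h2'' : (2:ℕ∞) ≤ M.eRk₀ {e, u} := by
            rw [show (2:ℕ∞) = 1 + 1 by norm_num]
            exact (ENat.add_one_le_iff ENat.one_ne_top).mpr h2'
          have hrV1 : M.eRk₀ V + 1 ≤ M.eRk₀ (M.E \ {x}) := by
            have hr' : M.eRk₀ {e, u} + M.eRk₀ V ≤ M.eRk₀ (M.E \ {x}) + 1 := by
              rw [← hUeu]; exact hr
            have h1 : (M.eRk₀ V + 1) + 1 ≤ M.eRk₀ (M.E \ {x}) + 1 := by
              calc (M.eRk₀ V + 1) + 1 = 2 + M.eRk₀ V := by ring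
                _ ≤ M.eRk₀ {e, u} + M.eRk₀ V := add_le_add_left h2'' _
                _ ≤ _ := hr'
            exact (WithTop.add_le_add_iff_right ENat.one_ne_top).mp h1
          rcases le_or_gt (M.eRk₀ V + 1) (M.eRk₀ (M.E \ {e})) with ha | hb
          · -- 2-separation of M\e : ({u,x}, V)
            refine no2sepN {u, x} V ?_ ?_ ?_ hV2 ?_
            · rw [Set.disjoint_left]
              rintro y (rfl | hy)
              · exact fun hyV => hd.ne_of_mem huU hyV rfl
              · rw [Set.mem_singleton_iff] at hy
                subst hy
                exact fun hyV => (hVs hyV).2 rfl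
            · ext y
              constructor
              · rintro (h | hyV)
                · rcases h with rfl | h
                  · exact ⟨huE, by simpa using hune⟩
                  · rw [Set.mem_singleton_iff] at h
                    exact h ▸ ⟨hxE, by simpa using hxe⟩
                · exact ⟨(hVs hyV).1, by simpa using (hd.ne_of_mem heU hyV).symm⟩
              · rintro ⟨hyE, hye⟩
                have hye' : y ≠ e := by simpa using hye
                by_cases hyx : y = x
                · exact Or.inl (Or.inr (by simp [hyx]))
                · have hmem : y ∈ U ∪ V := by rw [hu]; exact ⟨hyE, by simpa using hyx⟩
                  rcases hmem with h | h
                  · rw [hUeu] at h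
                    rcases h with rfl | h
                    · exact absurd rfl hye'
                    · rw [Set.mem_singleton_iff] at h
                      exact Or.inl (Or.inl (by simp [h]))
                  · exact Or.inr h
            · rw [Set.encard_pair hux]
            · have hux2 : M.eRk₀ {u, x} ≤ 2 :=
                (M.eRk₀_le_encard _).trans (le_of_eq (Set.encard_pair hux))
              calc M.eRk₀ {u, x} + M.eRk₀ V ≤ 2 + M.eRk₀ V := add_le_add_left hux2 _
                _ = (M.eRk₀ V + 1) + 1 := by ring
                _ ≤ M.eRk₀ (M.E \ {e}) + 1 := add_le_add_left ha _
          · -- e is then a coloop-like element : 1-separation of M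
            have hVe : M.eRk₀ (M.E \ {e}) ≤ M.eRk₀ V := (ENat.lt_add_one_iff (hfinAll _)).mp hb
            refine hM3 1 one_pos (by norm_num) {e} (M.E \ {e})
              (isKSep_mk disjoint_sdiff_right (Set.union_diff_cancel (by simpa using he))
                ?_ ?_ ?_)
            · simp
            · exact_mod_cast le_trans (by norm_num : (1:ℕ∞) ≤ 10) hEe10
            · have h1e : M.eRk₀ {e} ≤ 1 := (M.eRk₀_le_encard _).trans (by simp)
              calc M.eRk₀ {e} + M.eRk₀ (M.E \ {e}) ≤ 1 + M.eRk₀ (M.E \ {e}) :=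
                  add_le_add_left h1e _
                _ = M.eRk₀ (M.E \ {e}) + 1 := by ring
                _ ≤ M.eRk₀ V + 1 := add_le_add_left hVe _
                _ ≤ M.eRk₀ (M.E \ {x}) := hrV1
                _ ≤ M.eRk₀ M.E := M.eRk₀_mono diff_subset
                _ ≤ M.eRk₀ M.E + ((1 - 1 : ℕ) : ℕ∞) := le_self_add
    -- assemble
    intro k hk0 hk3 X Y hsep
    obtain ⟨hd, hu, hX, hY, hrr⟩ := isKSep_elim hsep
    have hXs : X ⊆ M.E \ {x} := by
      have h := hu ▸ Set.subset_union_left (s := X) (t := Y)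
      rwa [hMg] at h
    have hYs : Y ⊆ M.E \ {x} := by
      have h := hu ▸ Set.subset_union_right (s := X) (t := Y)
      rwa [hMg] at h
    rw [hMg] at hrr
    rw [hMrk X hXs, hMrk Y hYs, hMrk _ Subset.rfl] at hrr
    interval_cases k
    · -- k = 1
      rcases le_or_gt 2 X.encard with h2 | h2
      · exact build1 X Y hd (hu.trans hMg) h2 (by exact_mod_cast hY) (by simpa using hrr)
      · have hX1 : X.encard ≤ 1 := by
          rw [show (2:ℕ∞) = 1 + 1 by norm_num] at h2
          exact (ENat.lt_add_one_iff ENat.one_ne_top).mp h2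
        have hY2 : (2:ℕ∞) ≤ Y.encard := by
          by_contra hcon
          have hY1 : Y.encard ≤ 1 := by
            rw [show (2:ℕ∞) = 1 + 1 by norm_num] at hcon
            exact (ENat.lt_add_one_iff ENat.one_ne_top).mp (lt_of_not_ge hcon)
          have hbad : (10:ℕ∞) ≤ 2 := by
            calc (10:ℕ∞) ≤ (M.E \ {x}).encard := hEx10
              _ = X.encard + Y.encard := by
                rw [← (hu.trans hMg), Set.encard_union_eq hd]
              _ ≤ 1 + 1 := add_le_add hX1 hY1
              _ = 2 := by norm_num
          norm_num at hbad
        exact build1 Y X hd.symm (by rw [Set.union_comm]; exact hu.trans hMg) hY2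
          (by exact_mod_cast hX) (by rw [add_comm]; simpa using hrr)
    · -- k = 2
      have hrr2 : M.eRk₀ X + M.eRk₀ Y ≤ M.eRk₀ (M.E \ {x}) + 1 := by
        rwa [show ((2 - 1 : ℕ) : ℕ∞) = 1 by norm_num] at hrr
      have heXY : e ∈ X ∪ Y := by
        rw [hu]; exact heEx
      rcases heXY with h | h
      · exact main2aux X Y hd (hu.trans hMg) (by exact_mod_cast hX) (by exact_mod_cast hY)
          hrr2 h
      · exact main2aux Y X hd.symm (by rw [Set.union_comm]; exact hu.trans hMg)
          (by exact_mod_cast hY) (by exact_mod_cast hX) (by rw [add_comm]; exact hrr2) h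
  exact ⟨hNx3, hMx3⟩
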